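/- Let n ≥ 3 be an integer, let h satisfy hypotheses (H), let k ≥ 1 be an integer, and suppose there exist C2 > C1 > 0 and 0 < R1 < R such that h(r) ≤ C2 for all 0 ≤ r ≤ R and h(r) ≥ C1 for all 0 ≤ r ≤ R1. Suppose γ > 0, suppose σ_(k+1)(g_h)/σ_(k)(g_h) ≥ λ_(k+1)/λ_(k) − γ, and let a_k be a minimizer for σ_(k)(g_h) normalized so that a_k(0) = 1. Then ∫₀^{R1} (a_k'(r))² dr ≤ γ ρ. -/

import Mathlib

open MeasureTheory Set

/-- Hypotheses (H): `h` is smooth on `[0,R]`, positive on `[0,R)`, `h(R)=0`,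
`h'(R) = -1`, and all even-order derivatives of `h` vanish at `R`. -/
def SatisfiesH (R : ℝ) (h : ℝ → ℝ) : Prop :=
  ContDiffOn ℝ (⊤ : ℕ∞) h (Set.Icc 0 R) ∧
  (∀ r ∈ Set.Ico (0:ℝ) R, 0 < h r) ∧
  h R = 0 ∧
  derivWithin h (Set.Icc 0 R) R = -1 ∧
  ∀ k : ℕ, iteratedDerivWithin (2 * k) h (Set.Icc 0 R) R = 0

/-- The `k`-th distinct eigenvalue `λ_(k) = k (n + k - 2)` of the Laplacian on the
round unit sphere `S^{n-1}`. -/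
noncomputable def sphereEig (n k : ℕ) : ℝ := (k : ℝ) * ((n : ℝ) + (k : ℝ) - 2)

/-- The Rayleigh quotient
`R_λ(a; h) = (∫₀^R ((a')² h^{n-1} + λ a² h^{n-3}))/(a(0)² h(0)^{n-1})`. -/
noncomputable def rayleighQ (R : ℝ) (n : ℕ) (lam : ℝ) (h a : ℝ → ℝ) : ℝ :=
  (∫ r in (0:ℝ)..R,
      (deriv a r) ^ 2 * h r ^ ((n : ℤ) - 1) + lam * (a r) ^ 2 * h r ^ ((n : ℤ) - 3)) /
    ((a 0) ^ 2 * h 0 ^ ((n : ℤ) - 1))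

/-- Admissible test functions: Lipschitz on `[0,R]`, vanishing at `R`, nonzero at `0`. -/
def IsAdmissible (R : ℝ) (a : ℝ → ℝ) : Prop :=
  (∃ K : NNReal, LipschitzOnWith K a (Set.Icc 0 R)) ∧ a R = 0 ∧ a 0 ≠ 0

/-- The `k`-th distinct Steklov eigenvalue of the ball `[0,R] × S^{n-1}` with the
revolution metric `g_h`, characterized variationally. -/
noncomputable def steklov (R : ℝ) (n k : ℕ) (h : ℝ → ℝ) : ℝ :=
  sInf { v : ℝ | ∃ a : ℝ → ℝ, IsAdmissible R a ∧ v = rayleighQ R n (sphereEig n k) h a }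

/-- `a` is a minimizer realizing `σ_(k)(g_h)`. -/
def IsMinimizer (R : ℝ) (n k : ℕ) (h a : ℝ → ℝ) : Prop :=
  IsAdmissible R a ∧ rayleighQ R n (sphereEig n k) h a = steklov R n k h

open Filter Topology in
lemma aux_intervalIntegrable {f : ℝ → ℝ} {x y C : ℝ} (hxy : x ≤ y)
    (hm : AEStronglyMeasurable f (volume.restrict (Set.Ioc x y)))
    (hb : ∀ᵐ r ∂(volume.restrict (Set.Ioc x y)), ‖f r‖ ≤ C) :
    IntervalIntegrable f volume x y := by
  rw [intervalIntegrable_iff_integrableOn_Ioc_of_le hxy]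
  exact ⟨hm, HasFiniteIntegral.restrict_of_bounded (C := C) measure_Ioc_lt_top hb⟩

open Filter Topology in
lemma aux_deriv_bound {K : NNReal} {a : ℝ → ℝ} {R r : ℝ}
    (hL : LipschitzOnWith K a (Set.Icc 0 R)) (hr : r ∈ Set.Ioo 0 R) :
    |deriv a r| ≤ K := by
  by_cases hd : DifferentiableAt ℝ a r
  · have hslope : Tendsto (slope a r) (𝓝[≠] r) (𝓝 (deriv a r)) :=
      hasDerivAt_iff_tendsto_slope.mp hd.hasDerivAt
    have hrmem : r ∈ Set.Icc (0:ℝ) R := ⟨hr.1.le, hr.2.le⟩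
    have hev : ∀ᶠ x in 𝓝[≠] r, |slope a r x| ≤ K := by
      have hIcc : Set.Icc (0:ℝ) R ∈ 𝓝[≠] r :=
        nhdsWithin_le_nhds (Icc_mem_nhds hr.1 hr.2)
      filter_upwards [hIcc, self_mem_nhdsWithin] with x hx hx'
      have hx0 : x - r ≠ 0 := sub_ne_zero.2 hx'
      rw [slope_def_field, abs_div, div_le_iff₀ (abs_pos.2 hx0)]
      have := hL.dist_le_mul x hx r hrmem
      simpa [Real.dist_eq] using this
    exact le_of_tendsto hslope.abs hev
  · rw [deriv_zero_of_not_differentiableAt hd]; simp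

open Filter Topology in
set_option maxHeartbeats 2000000 in
theorem stmt_13 (n : ℕ) (hn : 3 ≤ n) (R : ℝ) (hR : 0 < R) (h : ℝ → ℝ)
    (hH : SatisfiesH R h) (k : ℕ) (hk : 1 ≤ k)
    (C1 C2 R1 : ℝ) (hC1 : 0 < C1) (hC12 : C1 < C2) (hR1 : 0 < R1) (hR1R : R1 < R)
    (hub : ∀ r ∈ Set.Icc (0:ℝ) R, h r ≤ C2)
    (hlb : ∀ r ∈ Set.Icc (0:ℝ) R1, C1 ≤ h r)
    (γ : ℝ) (hγ : 0 < γ)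
    (hratio : steklov R n (k + 1) h / steklov R n k h ≥
      sphereEig n (k + 1) / sphereEig n k - γ)
    (a : ℝ → ℝ) (ha : IsMinimizer R n k h a) (ha0 : a 0 = 1) :
    (∫ r in (0:ℝ)..R1, (deriv a r) ^ 2) ≤
      γ * ((C2 ^ (2 * (n - 2)) / C1 ^ (2 * (n - 1))) *
        (R * (sphereEig n k) ^ 2 + C2 ^ 2 * sphereEig n k / (R - R1)) /
        (sphereEig n (k + 1) - sphereEig n k)) := by
  obtain ⟨m, rfl⟩ : ∃ m, n = m + 3 := ⟨n - 3, by omega⟩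
  obtain ⟨⟨⟨K, hK⟩, haR, ha0ne⟩, hmin⟩ := ha
  obtain ⟨hsmooth, hpos, hR0, -, -⟩ := hH
  have hC2 : 0 < C2 := hC1.trans hC12
  have h0pos : 0 < h 0 := hpos 0 ⟨le_rfl, hR⟩
  have hnn : ∀ r ∈ Set.Icc (0:ℝ) R, 0 ≤ h r := by
    intro r hr
    rcases eq_or_lt_of_le hr.2 with he | hlt
    · rw [he, hR0]
    · exact (hpos r ⟨hr.1, hlt⟩).le
  have hz1 : ∀ x : ℝ, x ^ (((m+3 : ℕ) : ℤ) - 1) = x ^ (m+2) := by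
    intro x
    rw [show ((m+3 : ℕ) : ℤ) - 1 = ((m+2 : ℕ) : ℤ) by push_cast; ring, zpow_natCast]
  have hz3 : ∀ x : ℝ, x ^ (((m+3 : ℕ) : ℤ) - 3) = x ^ m := by
    intro x
    rw [show ((m+3 : ℕ) : ℤ) - 3 = ((m : ℕ) : ℤ) by push_cast; ring, zpow_natCast]
  have hray : ∀ (lam' : ℝ) (b : ℝ → ℝ), rayleighQ R (m+3) lam' h b =
      (∫ r in (0:ℝ)..R, (deriv b r)^2 * h r^(m+2) + lam' * ((b r)^2 * h r^m)) /
        ((b 0)^2 * h 0^(m+2)) := by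
    intro lam' b
    unfold rayleighQ
    simp only [hz1, hz3, mul_assoc]
  set lam := sphereEig (m+3) k with hlamdef
  set mu := sphereEig (m+3) (k+1) with hmudef
  have hk1 : (1:ℝ) ≤ (k:ℝ) := by exact_mod_cast hk
  have hm0 : (0:ℝ) ≤ (m:ℝ) := Nat.cast_nonneg m
  have hlam : 0 < lam := by
    rw [hlamdef]; unfold sphereEig; push_cast; nlinarith only [hk1, hm0]
  have hmu : 0 < mu := by
    rw [hmudef]; unfold sphereEig; push_cast; nlinarith only [hk1, hm0]
  have hml : 0 < mu - lam := by
    rw [hlamdef, hmudef]; unfold sphereEig; push_cast; nlinarith only [hk1, hm0]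
  -- measurability
  have hhm : ∀ p : ℕ, AEStronglyMeasurable (fun r => h r ^ p)
      (volume.restrict (Set.Icc 0 R)) :=
    fun p => (hsmooth.continuousOn.pow p).aestronglyMeasurable measurableSet_Icc
  have hrestr : ∀ {x y : ℝ}, 0 ≤ x → y ≤ R →
      volume.restrict (Set.Ioc x y) ≤ volume.restrict (Set.Icc 0 R) := by
    intro x y hx hy
    refine Measure.restrict_mono ?_ le_rfl
    intro r hr
    exact ⟨hx.trans hr.1.le, hr.2.trans hy⟩
  have ham : AEStronglyMeasurable a (volume.restrict (Set.Icc 0 R)) :=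
    hK.continuousOn.aestronglyMeasurable measurableSet_Icc
  set F1 : ℝ → ℝ := fun r => (deriv a r)^2 * h r^(m+2) with hF1def
  set F2 : ℝ → ℝ := fun r => (a r)^2 * h r^m with hF2def
  have hmF1 : ∀ {x y : ℝ}, 0 ≤ x → y ≤ R →
      AEStronglyMeasurable F1 (volume.restrict (Set.Ioc x y)) := by
    intro x y hx hy
    exact (((measurable_deriv a).pow_const 2).aestronglyMeasurable).mul
      ((hhm (m+2)).mono_measure (hrestr hx hy))
  have hmF2 : ∀ {x y : ℝ}, 0 ≤ x → y ≤ R →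
      AEStronglyMeasurable F2 (volume.restrict (Set.Ioc x y)) := by
    intro x y hx hy
    exact ((ham.mono_measure (hrestr hx hy)).pow 2).mul
      ((hhm m).mono_measure (hrestr hx hy))
  have hne_glob : ∀ z : ℝ, ∀ᵐ r ∂(volume : Measure ℝ), r ≠ z := by
    intro z
    have e : {r : ℝ | ¬ r ≠ z} = {z} := by ext r; simp
    rw [ae_iff, e]
    exact measure_singleton z
  have hKbd : ∀ r ∈ Set.Ioo (0:ℝ) R, |deriv a r| ≤ (K:ℝ) :=
    fun r hr => aux_deriv_bound hK hr
  have haeF1 : ∀ {x y : ℝ}, 0 ≤ x → y ≤ R →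
      ∀ᵐ r ∂(volume.restrict (Set.Ioc x y)), ‖F1 r‖ ≤ (K:ℝ)^2 * C2^(m+2) := by
    intro x y hx hy
    filter_upwards [ae_restrict_mem measurableSet_Ioc, ae_restrict_of_ae (hne_glob R)]
      with r hr hrne
    have hr1 : r ∈ Set.Icc (0:ℝ) R := ⟨hx.trans hr.1.le, hr.2.trans hy⟩
    have hr2 : r ∈ Set.Ioo (0:ℝ) R :=
      ⟨lt_of_le_of_lt hx hr.1, lt_of_le_of_ne (hr.2.trans hy) hrne⟩
    have h1 : |deriv a r| ≤ (K:ℝ) := hKbd r hr2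
    have h2 : (0:ℝ) ≤ h r := hnn r hr1
    have h3 : h r ≤ C2 := hub r hr1
    simp only [hF1def]
    rw [Real.norm_eq_abs, abs_mul, abs_pow, abs_of_nonneg (pow_nonneg h2 _)]
    gcongr
  have habd : ∀ r ∈ Set.Icc (0:ℝ) R, |a r| ≤ (K:ℝ) * R := by
    intro r hr
    have hd := hK.dist_le_mul r hr R ⟨hR.le, le_rfl⟩
    rw [Real.dist_eq, Real.dist_eq, haR, sub_zero] at hd
    refine hd.trans ?_
    have habs : |r - R| ≤ R := by
      rw [abs_sub_comm, abs_of_nonneg (by linarith [hr.2])]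
      linarith [hr.1]
    exact mul_le_mul_of_nonneg_left habs K.coe_nonneg
  have haeF2 : ∀ {x y : ℝ}, 0 ≤ x → y ≤ R →
      ∀ᵐ r ∂(volume.restrict (Set.Ioc x y)), ‖F2 r‖ ≤ ((K:ℝ)*R)^2 * C2^m := by
    intro x y hx hy
    filter_upwards [ae_restrict_mem measurableSet_Ioc] with r hr
    have hr1 : r ∈ Set.Icc (0:ℝ) R := ⟨hx.trans hr.1.le, hr.2.trans hy⟩
    have h1 : |a r| ≤ (K:ℝ)*R := habd r hr1
    have h2 : (0:ℝ) ≤ h r := hnn r hr1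
    have h3 : h r ≤ C2 := hub r hr1
    simp only [hF2def]
    rw [Real.norm_eq_abs, abs_mul, abs_pow, abs_of_nonneg (pow_nonneg h2 _)]
    gcongr
  have hiF1 : ∀ {x y : ℝ}, 0 ≤ x → x ≤ y → y ≤ R → IntervalIntegrable F1 volume x y := by
    intro x y hx hxy hy
    exact aux_intervalIntegrable hxy (hmF1 hx hy) (haeF1 hx hy)
  have hiF2 : ∀ {x y : ℝ}, 0 ≤ x → x ≤ y → y ≤ R → IntervalIntegrable F2 volume x y := by
    intro x y hx hxy hy
    exact aux_intervalIntegrable hxy (hmF2 hx hy) (haeF2 hx hy)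
  set A := ∫ r in (0:ℝ)..R, F1 r with hAdef
  set B := ∫ r in (0:ℝ)..R, F2 r with hBdef
  have hNum : ∀ lam' : ℝ,
      (∫ r in (0:ℝ)..R, (deriv a r)^2 * h r^(m+2) + lam' * ((a r)^2 * h r^m))
        = A + lam' * B := by
    intro lam'
    have e : (∫ r in (0:ℝ)..R, F1 r + lam' * F2 r) = A + lam' * B := by
      rw [intervalIntegral.integral_add (hiF1 le_rfl hR.le le_rfl)
        ((hiF2 le_rfl hR.le le_rfl).const_mul lam'),
        intervalIntegral.integral_const_mul]
    simpa only [hF1def, hF2def] using e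
  have hAnn : 0 ≤ A := by
    rw [hAdef]
    apply intervalIntegral.integral_nonneg hR.le
    intro u hu
    exact mul_nonneg (sq_nonneg _) (pow_nonneg (hnn u hu) _)
  -- positivity of B
  have hKpos : (0:ℝ) < (K:ℝ)+1 := by positivity
  set δ := min R1 (1/(2*((K:ℝ)+1))) with hδdef
  have hδpos : 0 < δ := lt_min hR1 (by positivity)
  have hδR1 : δ ≤ R1 := min_le_left _ _
  have hδR : δ ≤ R := hδR1.trans hR1R.le
  have halow : ∀ r ∈ Set.Icc (0:ℝ) δ, 1/2 ≤ a r := by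
    intro r hr
    have hd := hK.dist_le_mul r ⟨hr.1, hr.2.trans hδR⟩ 0 ⟨le_rfl, hR.le⟩
    rw [Real.dist_eq, Real.dist_eq, ha0, sub_zero] at hd
    have h1 : |a r - 1| ≤ (K:ℝ) * δ :=
      hd.trans (mul_le_mul_of_nonneg_left (by rw [abs_of_nonneg hr.1]; exact hr.2)
        K.coe_nonneg)
    have h2 : (K:ℝ) * δ ≤ 1/2 := by
      have hδ2 : δ ≤ 1/(2*((K:ℝ)+1)) := min_le_right _ _
      calc (K:ℝ)*δ ≤ ((K:ℝ)+1) * (1/(2*((K:ℝ)+1))) := by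
            apply mul_le_mul (by linarith) hδ2 hδpos.le (by linarith)
        _ = 1/2 := by field_simp
    have h3 := abs_le.1 (h1.trans h2)
    linarith only [h3.1]
  have hBpos : 0 < B := by
    have hBlow : δ * (C1^m/4) ≤ ∫ r in (0:ℝ)..δ, F2 r := by
      have hmono := intervalIntegral.integral_mono_on (μ := volume) hδpos.le
        intervalIntegrable_const (hiF2 le_rfl hδpos.le hδR)
        (g := F2) (f := fun _ => C1^m/4) ?_
      · rw [intervalIntegral.integral_const, sub_zero, smul_eq_mul] at hmono
        exact (le_of_eq (by ring)).trans hmono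
      · intro u hu
        have hu1 : u ∈ Set.Icc (0:ℝ) R1 := ⟨hu.1, hu.2.trans hδR1⟩
        have h1 : C1 ≤ h u := hlb u hu1
        have h2 : (1:ℝ)/2 ≤ a u := halow u hu
        simp only [hF2def]
        have h3 : C1^m ≤ h u^m := pow_le_pow_left₀ hC1.le h1 m
        have q1 : (1:ℝ)/4 ≤ (a u)^2 := by nlinarith only [h2, sq_nonneg (a u - 1/2)]
        calc C1^m/4 = (1/4) * C1^m := by ring
          _ ≤ (a u)^2 * h u^m :=
              mul_le_mul q1 h3 (pow_nonneg hC1.le m) (le_trans (by norm_num) q1)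
    have hsplit : (∫ r in (0:ℝ)..δ, F2 r) + (∫ r in δ..R, F2 r) = B :=
      intervalIntegral.integral_add_adjacent_intervals (hiF2 le_rfl hδpos.le hδR)
        (hiF2 hδpos.le hδR le_rfl)
    have h2 : 0 ≤ ∫ r in δ..R, F2 r :=
      intervalIntegral.integral_nonneg hδR
        (fun u hu => mul_nonneg (sq_nonneg _)
          (pow_nonneg (hnn u ⟨hδpos.le.trans hu.1, hu.2⟩) _))
    have h3 : 0 < δ * (C1^m/4) := by positivity
    linarith only [hsplit, h2, h3, hBlow]
  set D := h 0^(m+2) with hDdef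
  have hDpos : 0 < D := pow_pos h0pos _
  have hDle : D ≤ C2^(m+2) := pow_le_pow_left₀ h0pos.le (hub 0 ⟨le_rfl, hR.le⟩) _
  have hSval : steklov R (m+3) k h = (A + lam * B)/D := by
    rw [← hmin, hray, ha0, hNum lam]
    simp [hDdef]
  have hbdd : ∀ lam' : ℝ, 0 ≤ lam' →
      BddBelow {v : ℝ | ∃ b : ℝ → ℝ, IsAdmissible R b ∧ v = rayleighQ R (m+3) lam' h b} := by
    intro lam' hlam'
    refine ⟨0, ?_⟩
    rintro v ⟨b, hbadm, rfl⟩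
    rw [hray]
    apply div_nonneg
    · apply intervalIntegral.integral_nonneg hR.le
      intro u hu
      have h2 := hnn u hu
      exact add_nonneg (mul_nonneg (sq_nonneg _) (pow_nonneg h2 _))
        (mul_nonneg hlam' (mul_nonneg (sq_nonneg _) (pow_nonneg h2 _)))
    · exact mul_nonneg (sq_nonneg _) (pow_nonneg h0pos.le _)
  have hTval : steklov R (m+3) (k+1) h ≤ (A + mu * B)/D := by
    have hle : steklov R (m+3) (k+1) h ≤ rayleighQ R (m+3) mu h a :=
      csInf_le (hbdd mu hmu.le) ⟨a, ⟨⟨K, hK⟩, haR, ha0ne⟩, rfl⟩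
    rwa [hray, ha0, hNum mu, one_pow, one_mul] at hle
  -- test function
  set c := (R - R1)⁻¹ with hcdef
  have hRR1 : (0:ℝ) < R - R1 := by linarith
  have hcpos : 0 < c := inv_pos.2 hRR1
  have h1c : (R - R1) * c = 1 := by rw [hcdef]; field_simp
  set b : ℝ → ℝ := fun r => min 1 ((R - r) * c) with hbdef
  have hlipb : LipschitzWith (Real.toNNReal c) b := by
    have haff : LipschitzWith (Real.toNNReal c) (fun x : ℝ => (R - x) * c) := by
      apply LipschitzWith.of_dist_le_mul
      intro x y
      rw [Real.dist_eq, Real.dist_eq, Real.coe_toNNReal c hcpos.le]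
      have e : (R - x) * c - (R - y) * c = (y - x) * c := by ring
      rw [e, abs_mul, abs_of_nonneg hcpos.le, abs_sub_comm, mul_comm]
    exact haff.const_min 1
  have hbR : b R = 0 := by simp [hbdef]
  have hb0 : b 0 = 1 := by
    simp only [hbdef]
    rw [min_eq_left]
    linarith only [h1c, mul_nonneg hR1.le hcpos.le]
  have hbadm : IsAdmissible R b :=
    ⟨⟨Real.toNNReal c, hlipb.lipschitzOnWith⟩, hbR, by rw [hb0]; exact one_ne_zero⟩
  have hb0le : ∀ r ∈ Set.Icc (0:ℝ) R, 0 ≤ b r := by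
    intro r hr
    simp only [hbdef]
    exact le_min one_pos.le (mul_nonneg (by linarith [hr.2]) hcpos.le)
  have hble1 : ∀ r : ℝ, b r ≤ 1 := by
    intro r
    simp only [hbdef]
    exact min_le_left _ _
  have hdb1 : ∀ r : ℝ, r < R1 → deriv b r = 0 := by
    intro r hr
    have hev : b =ᶠ[𝓝 r] fun _ => (1:ℝ) := by
      filter_upwards [Iio_mem_nhds hr] with x hx
      simp only [hbdef]
      apply min_eq_left
      have hx' : x < R1 := hx
      linarith only [h1c, mul_nonneg (by linarith only [hx'] : (0:ℝ) ≤ R1 - x) hcpos.le]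
    rw [hev.deriv_eq]
    exact deriv_const r 1
  have hdb2 : ∀ r : ℝ, R1 < r → deriv b r = -c := by
    intro r hr
    have hev : b =ᶠ[𝓝 r] fun x => (R - x) * c := by
      filter_upwards [Ioi_mem_nhds hr] with x hx
      simp only [hbdef]
      apply min_eq_right
      have hx' : R1 < x := hx
      linarith only [h1c, mul_nonneg (by linarith only [hx'] : (0:ℝ) ≤ x - R1) hcpos.le]
    rw [hev.deriv_eq]
    have hd : HasDerivAt (fun x : ℝ => (R - x) * c) (-1 * c) r :=
      ((hasDerivAt_id r).const_sub R).mul_const c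
    rw [hd.deriv]; ring
  have hdbsq : ∀ r : ℝ, r ≠ R1 → (deriv b r)^2 ≤ c^2 := by
    intro r hrne
    rcases lt_or_gt_of_ne hrne with hlt | hgt
    · rw [hdb1 r hlt]; simpa using sq_nonneg c
    · rw [hdb2 r hgt, neg_sq]
  set Gb : ℝ → ℝ := fun r => (deriv b r)^2 * h r^(m+2) + lam * ((b r)^2 * h r^m)
    with hGbdef
  have hmGb : ∀ {x y : ℝ}, 0 ≤ x → y ≤ R →
      AEStronglyMeasurable Gb (volume.restrict (Set.Ioc x y)) := by
    intro x y hx hy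
    exact ((((measurable_deriv b).pow_const 2).aestronglyMeasurable).mul
        ((hhm (m+2)).mono_measure (hrestr hx hy))).add
      (((((hlipb.continuous.measurable).pow_const 2).aestronglyMeasurable).mul
        ((hhm m).mono_measure (hrestr hx hy))).const_mul lam)
  have haeGb : ∀ {x y : ℝ}, 0 ≤ x → y ≤ R →
      ∀ᵐ r ∂(volume.restrict (Set.Ioc x y)), ‖Gb r‖ ≤ c^2*C2^(m+2) + lam*C2^m := by
    intro x y hx hy
    filter_upwards [ae_restrict_mem measurableSet_Ioc, ae_restrict_of_ae (hne_glob R1)]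
      with r hr hrne
    have hr1 : r ∈ Set.Icc (0:ℝ) R := ⟨hx.trans hr.1.le, hr.2.trans hy⟩
    have h2 : (0:ℝ) ≤ h r := hnn r hr1
    have h3 : h r ≤ C2 := hub r hr1
    have h4 : (deriv b r)^2 ≤ c^2 := hdbsq r hrne
    have h5 : 0 ≤ b r := hb0le r hr1
    have h6 : b r ≤ 1 := hble1 r
    simp only [hGbdef]
    have hGnn : 0 ≤ (deriv b r)^2 * h r^(m+2) + lam * ((b r)^2 * h r^m) :=
      add_nonneg (mul_nonneg (sq_nonneg _) (pow_nonneg h2 _))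
        (mul_nonneg hlam.le (mul_nonneg (sq_nonneg _) (pow_nonneg h2 _)))
    rw [Real.norm_eq_abs, abs_of_nonneg hGnn]
    have e1 : (deriv b r)^2 * h r^(m+2) ≤ c^2*C2^(m+2) :=
      mul_le_mul h4 (pow_le_pow_left₀ h2 h3 _) (pow_nonneg h2 _) (sq_nonneg c)
    have e2 : lam * ((b r)^2 * h r^m) ≤ lam * C2^m := by
      apply mul_le_mul_of_nonneg_left _ hlam.le
      calc (b r)^2 * h r^m ≤ 1 * C2^m := by
            apply mul_le_mul _ (pow_le_pow_left₀ h2 h3 _) (pow_nonneg h2 _) one_pos.le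
            simpa using pow_le_pow_left₀ h5 h6 2
        _ = C2^m := one_mul _
    linarith only [e1, e2]
  have hiGb : ∀ {x y : ℝ}, 0 ≤ x → x ≤ y → y ≤ R → IntervalIntegrable Gb volume x y := by
    intro x y hx hxy hy
    exact aux_intervalIntegrable hxy (hmGb hx hy) (haeGb hx hy)
  have hNb : (∫ r in (0:ℝ)..R, Gb r) ≤ lam * C2^m * R + C2^(m+2) * c := by
    rw [← intervalIntegral.integral_add_adjacent_intervals
      (hiGb le_rfl hR1.le hR1R.le) (hiGb hR1.le hR1R.le le_rfl)]
    have hp1 : (∫ r in (0:ℝ)..R1, Gb r) ≤ lam * C2^m * R1 := by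
      have hmono := intervalIntegral.integral_mono_ae_restrict (μ := volume) hR1.le
        (hiGb le_rfl hR1.le hR1R.le) (g := fun _ => lam * C2^m)
        intervalIntegrable_const ?_
      · rw [intervalIntegral.integral_const, sub_zero, smul_eq_mul] at hmono
        exact hmono.trans (le_of_eq (by ring))
      · filter_upwards [ae_restrict_mem measurableSet_Icc,
          ae_restrict_of_ae (hne_glob R1)] with r hr hrne
        have hrlt : r < R1 := lt_of_le_of_ne hr.2 hrne
        have hr1 : r ∈ Set.Icc (0:ℝ) R := ⟨hr.1, by linarith⟩
        have h2 : (0:ℝ) ≤ h r := hnn r hr1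
        have h3 : h r ≤ C2 := hub r hr1
        simp only [hGbdef, hdb1 r hrlt]
        have h5 : 0 ≤ b r := hb0le r hr1
        have h6 : b r ≤ 1 := hble1 r
        have e2 : (b r)^2 * h r^m ≤ C2^m := by
          calc (b r)^2 * h r^m ≤ 1 * C2^m := by
                apply mul_le_mul _ (pow_le_pow_left₀ h2 h3 _) (pow_nonneg h2 _) one_pos.le
                simpa using pow_le_pow_left₀ h5 h6 2
            _ = C2^m := one_mul _
        have := mul_le_mul_of_nonneg_left e2 hlam.le
        simpa using this
    have hp2 : (∫ r in R1..R, Gb r) ≤ (c^2*C2^(m+2) + lam*C2^m) * (R - R1) := by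
      have hmono := intervalIntegral.integral_mono_ae_restrict (μ := volume) hR1R.le
        (hiGb hR1.le hR1R.le le_rfl) (g := fun _ => c^2*C2^(m+2) + lam*C2^m)
        intervalIntegrable_const ?_
      · rw [intervalIntegral.integral_const, smul_eq_mul] at hmono
        exact hmono.trans (le_of_eq (by ring))
      · filter_upwards [ae_restrict_mem measurableSet_Icc,
          ae_restrict_of_ae (hne_glob R1)] with r hr hrne
        have hr1 : r ∈ Set.Icc (0:ℝ) R := ⟨hR1.le.trans hr.1, hr.2⟩
        have h2 : (0:ℝ) ≤ h r := hnn r hr1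
        have h3 : h r ≤ C2 := hub r hr1
        have h4 : (deriv b r)^2 ≤ c^2 := hdbsq r hrne
        have h5 : 0 ≤ b r := hb0le r hr1
        have h6 : b r ≤ 1 := hble1 r
        simp only [hGbdef]
        have e1 : (deriv b r)^2 * h r^(m+2) ≤ c^2*C2^(m+2) :=
          mul_le_mul h4 (pow_le_pow_left₀ h2 h3 _) (pow_nonneg h2 _) (sq_nonneg c)
        have e2 : lam * ((b r)^2 * h r^m) ≤ lam * C2^m := by
          apply mul_le_mul_of_nonneg_left _ hlam.le
          calc (b r)^2 * h r^m ≤ 1 * C2^m := by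
                apply mul_le_mul _ (pow_le_pow_left₀ h2 h3 _) (pow_nonneg h2 _) one_pos.le
                simpa using pow_le_pow_left₀ h5 h6 2
            _ = C2^m := one_mul _
        linarith only [e1, e2]
    have hcc : c^2 * (R - R1) = c := by
      rw [hcdef]
      rw [sq]
      field_simp
    have hexp : (c^2*C2^(m+2) + lam*C2^m) * (R - R1)
        = lam*C2^m*(R - R1) + C2^(m+2)*c := by
      linear_combination C2^(m+2) * hcc
    rw [hexp] at hp2
    linarith only [hp1, hp2]
  have hNbnn : 0 ≤ lam * C2^m * R + C2^(m+2) * c := by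
    have h1 := mul_nonneg (mul_nonneg hlam.le (pow_nonneg hC2.le m)) hR.le
    have h2 := mul_nonneg (pow_nonneg hC2.le (m+2)) hcpos.le
    linarith only [h1, h2]
  have hS0nn : 0 ≤ (lam * C2^m * R + C2^(m+2) * c)/C1^(m+2) :=
    div_nonneg hNbnn (pow_nonneg hC1.le _)
  have hS0 : steklov R (m+3) k h ≤ (lam * C2^m * R + C2^(m+2) * c)/C1^(m+2) := by
    have hle : steklov R (m+3) k h ≤ rayleighQ R (m+3) lam h b :=
      csInf_le (hbdd lam hlam.le) ⟨b, hbadm, rfl⟩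
    refine hle.trans ?_
    rw [hray, hb0, one_pow, one_mul]
    exact div_le_div₀ hNbnn hNb (pow_pos hC1 _)
      (pow_le_pow_left₀ hC1.le (hlb 0 ⟨le_rfl, hR1.le⟩) _)
  have hSpos : 0 < steklov R (m+3) k h := by
    rw [hSval]
    apply div_pos _ hDpos
    have h1 : 0 < lam * B := mul_pos hlam hBpos
    linarith only [hAnn, h1]
  have hTS : (mu - γ*lam) * steklov R (m+3) k h ≤ lam * steklov R (m+3) (k+1) h := by
    have h0 : mu/lam - γ ≤ steklov R (m+3) (k+1) h / steklov R (m+3) k h := hratio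
    have h1 : (mu/lam - γ) * steklov R (m+3) k h ≤ steklov R (m+3) (k+1) h :=
      (le_div_iff₀ hSpos).1 h0
    have h2 := mul_le_mul_of_nonneg_left h1 hlam.le
    have e : (mu - γ*lam) * steklov R (m+3) k h
        = lam * ((mu/lam - γ) * steklov R (m+3) k h) := by
      have hmc : mu / lam * lam = mu := div_mul_cancel₀ mu hlam.ne'
      linear_combination (-(steklov R (m+3) k h)) * hmc
    rw [e]
    exact h2
  have hkey : (mu - lam) * A ≤ γ * lam * (A + lam * B) := by
    have h1 : (mu - γ*lam) * ((A + lam*B)/D) ≤ lam * ((A + mu*B)/D) := by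
      refine le_trans ?_ (mul_le_mul_of_nonneg_left hTval hlam.le)
      rw [← hSval]
      exact hTS
    have h2 : (mu - γ*lam) * (A + lam*B) ≤ lam * (A + mu*B) := by
      have h3 := mul_le_mul_of_nonneg_right h1 hDpos.le
      rw [mul_assoc, mul_assoc, div_mul_cancel₀ _ hDpos.ne',
        div_mul_cancel₀ _ hDpos.ne'] at h3
      exact h3
    linarith only [h2]
  have hABle : A + lam*B ≤ C2^(m+2) * ((lam * C2^m * R + C2^(m+2) * c)/C1^(m+2)) := by
    have h1 : (A + lam*B)/D ≤ (lam * C2^m * R + C2^(m+2) * c)/C1^(m+2) := by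
      rw [← hSval]; exact hS0
    calc A + lam*B = ((A + lam*B)/D)*D := (div_mul_cancel₀ _ hDpos.ne').symm
      _ ≤ ((lam * C2^m * R + C2^(m+2) * c)/C1^(m+2))*D :=
          mul_le_mul_of_nonneg_right h1 hDpos.le
      _ ≤ ((lam * C2^m * R + C2^(m+2) * c)/C1^(m+2))*C2^(m+2) :=
          mul_le_mul_of_nonneg_left hDle hS0nn
      _ = C2^(m+2) * ((lam * C2^m * R + C2^(m+2) * c)/C1^(m+2)) := mul_comm _ _
  have hAkey : (mu - lam) * A
      ≤ γ * lam * (C2^(m+2) * ((lam * C2^m * R + C2^(m+2) * c)/C1^(m+2))) :=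
    hkey.trans (mul_le_mul_of_nonneg_left hABle (mul_nonneg hγ.le hlam.le))
  have hisq : IntervalIntegrable (fun r => (deriv a r)^2) volume 0 R1 := by
    apply aux_intervalIntegrable hR1.le
      (((measurable_deriv a).pow_const 2).aestronglyMeasurable)
    filter_upwards [ae_restrict_mem measurableSet_Ioc] with r hr
    have hr2 : r ∈ Set.Ioo (0:ℝ) R := ⟨hr.1, lt_of_le_of_lt hr.2 hR1R⟩
    have h1 := hKbd r hr2
    rw [Real.norm_eq_abs, abs_of_nonneg (sq_nonneg _)]
    calc (deriv a r)^2 = |deriv a r|^2 := (sq_abs _).symm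
      _ ≤ (K:ℝ)^2 := pow_le_pow_left₀ (abs_nonneg _) h1 2
  have hL1 : C1^(m+2) * (∫ r in (0:ℝ)..R1, (deriv a r)^2) ≤ ∫ r in (0:ℝ)..R1, F1 r := by
    rw [← intervalIntegral.integral_const_mul]
    apply intervalIntegral.integral_mono_on hR1.le (hisq.const_mul _)
      (hiF1 le_rfl hR1.le hR1R.le)
    intro u hu
    have h1 : C1^(m+2) ≤ h u^(m+2) := pow_le_pow_left₀ hC1.le (hlb u hu) _
    simp only [hF1def]
    calc C1^(m+2) * (deriv a u)^2 = (deriv a u)^2 * C1^(m+2) := mul_comm _ _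
      _ ≤ (deriv a u)^2 * h u^(m+2) := mul_le_mul_of_nonneg_left h1 (sq_nonneg _)
  have hL2 : (∫ r in (0:ℝ)..R1, F1 r) ≤ A := by
    rw [hAdef, ← intervalIntegral.integral_add_adjacent_intervals
      (hiF1 le_rfl hR1.le hR1R.le) (hiF1 hR1.le hR1R.le le_rfl)]
    have h2 : 0 ≤ ∫ r in R1..R, F1 r :=
      intervalIntegral.integral_nonneg hR1R.le
        (fun u hu => mul_nonneg (sq_nonneg _)
          (pow_nonneg (hnn u ⟨hR1.le.trans hu.1, hu.2⟩) _))
    linarith only [h2]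
  have e2 : 2*(m+3-2) = 2*m+2 := by omega
  have e1 : 2*(m+3-1) = 2*m+4 := by omega
  rw [e2, e1]
  have hstep1 : (∫ r in (0:ℝ)..R1, (deriv a r)^2) ≤ A/C1^(m+2) := by
    rw [le_div_iff₀ (pow_pos hC1 _)]
    calc (∫ r in (0:ℝ)..R1, (deriv a r)^2) * C1^(m+2)
        = C1^(m+2) * (∫ r in (0:ℝ)..R1, (deriv a r)^2) := mul_comm _ _
      _ ≤ A := le_trans hL1 hL2
  have hstep2 : A ≤ γ * lam * (C2^(m+2) * ((lam * C2^m * R + C2^(m+2) * c)/C1^(m+2)))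
      / (mu - lam) := by
    rw [le_div_iff₀ hml]
    calc A * (mu - lam) = (mu - lam) * A := mul_comm _ _
      _ ≤ _ := hAkey
  have hstep3 : (∫ r in (0:ℝ)..R1, (deriv a r)^2)
      ≤ γ * lam * (C2^(m+2) * ((lam * C2^m * R + C2^(m+2) * c)/C1^(m+2)))
        / (mu - lam) / C1^(m+2) := by
    refine hstep1.trans ?_
    gcongr
  refine hstep3.trans (le_of_eq ?_)
  rw [hcdef]
  field_simp
  ring
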